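/- Let (Ω, F, Λ) be such that Ω is a measurable space, Λ a compact metric space, and Y : Ω × Λ → ℝ a map measurable in ω for each θ and continuous in θ for each ω. Let P be a family of probability measures on Ω and P̄ the family of all probability measures on Ω × Λ whose Ω-marginal lies in P. Then Y ≥ 0 P̄-quasi-surely if and only if, for P-quasi-every ω, Y(ω,θ) ≥ 0 for all θ ∈ Λ. -/

import Mathlib

open MeasureTheory

/-- `Y ≥ 0` quasi-surely under the enlarged family iff for quasi-every `ω`,
`Y(ω,θ) ≥ 0` for all `θ`. -/
theorem stmt6 {Ω Λ : Type*} [MeasurableSpace Ω] [MetricSpace Λ] [CompactSpace Λ]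
    [MeasurableSpace Λ] [BorelSpace Λ]
    (Y : Ω → Λ → ℝ)
    (hmeas : ∀ θ, Measurable fun ω => Y ω θ)
    (hcont : ∀ ω, Continuous (Y ω))
    (P : Set (Measure Ω))
    (hP : ∀ μ ∈ P, IsProbabilityMeasure μ) :
    (∀ ν : Measure (Ω × Λ), IsProbabilityMeasure ν → ν.map Prod.fst ∈ P →
        ν {p : Ω × Λ | ¬ 0 ≤ Y p.1 p.2} = 0)
      ↔ (∀ μ ∈ P, μ {ω | ¬ ∀ θ : Λ, 0 ≤ Y ω θ} = 0) := by
  obtain ⟨s, hs_count, hs_dense⟩ := TopologicalSpace.exists_countable_dense Λ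
  have hbad : {ω | ¬ ∀ θ : Λ, 0 ≤ Y ω θ} = ⋃ θ ∈ s, {ω | Y ω θ < 0} := by
    ext ω
    simp only [Set.mem_setOf_eq, not_forall, not_le, Set.mem_iUnion, exists_prop]
    constructor
    · rintro ⟨θ, hθ⟩
      have hopen : IsOpen {θ' : Λ | Y ω θ' < 0} := isOpen_lt (hcont ω) continuous_const
      obtain ⟨θ₀, hθ₀, hθ₀s⟩ := hs_dense.exists_mem_open hopen ⟨θ, hθ⟩
      exact ⟨θ₀, hθ₀, hθ₀s⟩
    · rintro ⟨θ, _, hθ⟩; exact ⟨θ, hθ⟩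
  have hbad_meas : MeasurableSet {ω | ¬ ∀ θ : Λ, 0 ≤ Y ω θ} := by
    rw [hbad]
    exact MeasurableSet.biUnion hs_count
      (fun θ _ => measurableSet_lt (hmeas θ) measurable_const)
  constructor
  · intro h μ hμ
    haveI := hP μ hμ
    rw [hbad, measure_biUnion_null_iff hs_count]
    intro θ _
    set f : Ω → Ω × Λ := fun ω => (ω, θ) with hf_def
    have hf : Measurable f := measurable_id.prodMk measurable_const
    haveI : IsProbabilityMeasure (μ.map f) := Measure.isProbabilityMeasure_map hf.aemeasurable
    have hmarg : (μ.map f).map Prod.fst = μ := by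
      rw [Measure.map_map measurable_fst hf]
      have : (Prod.fst ∘ f : Ω → Ω) = id := rfl
      rw [this, Measure.map_id]
    have h0 := h (μ.map f) this (by rw [hmarg]; exact hμ)
    have hle := Measure.le_map_apply (μ := μ) hf.aemeasurable {p : Ω × Λ | ¬ 0 ≤ Y p.1 p.2}
    have hpre : f ⁻¹' {p : Ω × Λ | ¬ 0 ≤ Y p.1 p.2} = {ω | Y ω θ < 0} := by
      ext ω; simp [hf_def, not_le]
    rw [hpre, h0] at hle
    exact le_antisymm hle bot_le
  · intro h ν hν hνP
    have hsub : {p : Ω × Λ | ¬ 0 ≤ Y p.1 p.2}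
        ⊆ Prod.fst ⁻¹' {ω | ¬ ∀ θ : Λ, 0 ≤ Y ω θ} :=
      fun p hp h' => hp (h' p.2)
    refine measure_mono_null hsub ?_
    rw [← Measure.map_apply measurable_fst hbad_meas]
    exact h _ hνP
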